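/- Let X be a sequential space with unique sequential limits, let (a_n) be an injective sequence converging to x with x ∉ {a_n : n}, and let {M_α : α < 𝔠} be a mad family on ℕ. In the topology O* generated by O and the sets X ∖ {a_n : n ∈ M_α}, the set A_ω = {a_n : n ∈ ℕ} is sequentially closed. -/

import Mathlib

open Filter Topology Set

/-- in the topology O* generated by O together with the complements
of the sets {a_n : n ∈ M} for M in a mad family of size 𝔠, the set
A_ω = {a_n : n ∈ ℕ} is sequentially closed. -/
theorem stmt_13 {X : Type*} [t : TopologicalSpace X] [SequentialSpace X]
    (huniq : ∀ (u : ℕ → X) (y z : X),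
      Tendsto u atTop (𝓝 y) → Tendsto u atTop (𝓝 z) → y = z)
    (a : ℕ → X) (ha : Function.Injective a)
    (x : X) (hconv : Tendsto a atTop (𝓝 x)) (hx : x ∉ Set.range a)
    (𝒜 : Set (Set ℕ))
    (hinf : ∀ M ∈ 𝒜, M.Infinite)
    (had : ∀ M ∈ 𝒜, ∀ N ∈ 𝒜, M ≠ N → (M ∩ N).Finite)
    (hmad : ∀ M : Set ℕ, M.Infinite → ∃ N ∈ 𝒜, (M ∩ N).Infinite)
    (hcard : Cardinal.mk 𝒜 = Cardinal.continuum) :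
    @IsSeqClosed X
      (TopologicalSpace.generateFrom
        ({U : Set X | IsOpen U} ∪ {s : Set X | ∃ M ∈ 𝒜, s = (a '' M)ᶜ}))
      (Set.range a) := by
  set S := ({U : Set X | IsOpen U} ∪ {s : Set X | ∃ M ∈ 𝒜, s = (a '' M)ᶜ}) with hS
  set t' := TopologicalSpace.generateFrom S with ht'
  intro u y hu hlim
  by_contra hy
  have hle : t' ≤ t := fun s hs => TopologicalSpace.GenerateOpen.basic s (Or.inl hs)
  have hlimO : Tendsto u atTop (@nhds X t y) := hlim.mono_right (nhds_mono hle)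
  choose k hk using hu
  by_cases hK : (Set.range k).Finite
  · have hfib : ∃ m, (k ⁻¹' {m}).Infinite := by
      by_contra h
      push_neg at h
      have hsub : (Set.univ : Set ℕ) ⊆ ⋃ m ∈ Set.range k, k ⁻¹' {m} :=
        fun n _ => Set.mem_biUnion ⟨n, rfl⟩ rfl
      exact Set.infinite_univ ((hK.biUnion fun m _ => h m).subset hsub)
    obtain ⟨m, hm'⟩ := hfib
    have hfreq : ∃ᶠ n in atTop, k n = m :=
      Nat.frequently_atTop_iff_infinite.mpr hm'
    obtain ⟨φ, hφmono, hφ⟩ := Filter.extraction_of_frequently_atTop hfreq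
    have h1 : Tendsto (u ∘ φ) atTop (@nhds X t y) := hlimO.comp hφmono.tendsto_atTop
    have h2 : Tendsto (u ∘ φ) atTop (@nhds X t (a m)) := by
      have heq : (u ∘ φ) = fun _ => a m := funext fun n => by
        simp only [Function.comp_apply, ← hk (φ n), hφ n]
      rw [heq]
      exact @tendsto_const_nhds X t ℕ (a m) atTop
    exact hy ⟨m, (huniq _ y (a m) h1 h2).symm⟩
  · obtain ⟨N, hN𝒜, hNinf⟩ := hmad (Set.range k) hK
    have hopen : IsOpen[t'] ((a '' N)ᶜ) :=
      TopologicalSpace.GenerateOpen.basic _ (Or.inr ⟨N, hN𝒜, rfl⟩)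
    have hmem : y ∈ (a '' N)ᶜ := fun h => hy (Set.image_subset_range a N h)
    have hev : ∀ᶠ n in atTop, u n ∈ (a '' N)ᶜ :=
      hlim (@IsOpen.mem_nhds X t' y _ hopen hmem)
    obtain ⟨n0, hn0⟩ := eventually_atTop.mp hev
    have hsub : (Set.range k ∩ N) ⊆ k '' (Set.Iio n0) := by
      rintro m ⟨⟨n, rfl⟩, hmN⟩
      refine ⟨n, Set.mem_Iio.mpr ?_, rfl⟩
      by_contra h
      push_neg at h
      exact hn0 n h ⟨k n, hmN, hk n⟩
    exact hNinf (((Set.finite_Iio n0).image k).subset hsub)
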